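/- arXiv:1503.01249 — 2 statements merged into one kernel-verified Lean document; each statement's English description precedes it below -/
import Mathlib

section
/- For integers 1 ≤ w ≤ s < q, the alternating binomial identity ∑_{i=w}^{s} (-1)^{s-i} C(q-i-1, s-i) C(q-w, i-w) = 1 holds. -/
lemma ring_choose_neg (a k : ℕ) :
    Ring.choose (-(a + 1) : ℤ) k = (-1) ^ k * Nat.choose (a + k) k := by
  rw [Ring.choose]
  have h : (-(a + 1) : ℤ) - k + 1 = Int.negSucc (a + k) + 1 := by
    rw [Int.negSucc_eq]; push_cast; ring
  rcases Nat.eq_zero_or_pos (a + k) with h0 | h0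
  · obtain ⟨rfl, rfl⟩ : a = 0 ∧ k = 0 := by omega
    show Ring.multichoose (0 : ℤ) 0 = _
    simp [Ring.multichoose_zero_right]
  · have h' : (-(a + 1) : ℤ) - k + 1 = Int.negSucc (a + k - 1) := by
      rw [Int.negSucc_eq]; push_cast [Nat.cast_sub h0]; ring
    rw [h']
    show Int.multichoose (Int.negSucc (a + k - 1)) k = _
    rw [Int.multichoose]
    rw [show a + k - 1 + 1 = a + k by omega]
    rw [Int.coe_negOnePow_natCast]

lemma key (m n : ℕ) (h : m ≤ n) :
    ∑ j ∈ Finset.range (m + 1),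
      (-1 : ℤ) ^ (m - j) * (Nat.choose (n - j) (m - j)) * (Nat.choose (n + 1) j) = 1 := by
  have hvdm := Ring.add_choose_eq (R := ℤ) (r := (m : ℤ) - n - 1) (s := ((n : ℤ) + 1)) m
    (Commute.all _ _)
  have hl : ((m : ℤ) - n - 1) + ((n : ℤ) + 1) = (m : ℤ) := by ring
  rw [hl, Ring.choose_natCast, Nat.choose_self, Nat.cast_one,
    Finset.Nat.sum_antidiagonal_eq_sum_range_succ (fun a b =>
      Ring.choose ((m : ℤ) - n - 1) a * Ring.choose ((n : ℤ) + 1) b)] at hvdm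
  refine Eq.trans ?_ hvdm.symm
  rw [← Finset.sum_range_reflect]
  refine Finset.sum_congr rfl fun k hk => ?_
  simp only [Finset.mem_range] at hk
  have e1 : m + 1 - 1 - k = m - k := by omega
  have e2 : m - (m - k) = k := by omega
  have e3 : n - (m - k) = n - m + k := by omega
  rw [e1, e2, e3,
    show ((m : ℤ) - n - 1) = -(((n - m : ℕ) : ℤ) + 1) by push_cast [Nat.cast_sub h]; ring,
    ring_choose_neg,
    show ((n : ℤ) + 1) = ((n + 1 : ℕ) : ℤ) by push_cast; ring,
    Ring.choose_natCast]

/-- For integers `1 ≤ w ≤ s < q`, the alternating binomial identity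
`∑_{i=w}^{s} (-1)^{s-i} C(q-i-1, s-i) C(q-w, i-w) = 1` holds. -/
theorem cutHDMR_monomial_identity (q s w : ℕ) (hw : 1 ≤ w) (hws : w ≤ s) (hsq : s < q) :
    ∑ i ∈ Finset.Icc w s,
      (-1 : ℤ) ^ (s - i) * (Nat.choose (q - i - 1) (s - i)) * (Nat.choose (q - w) (i - w)) = 1 := by
  obtain ⟨m, rfl⟩ : ∃ m, s = w + m := ⟨s - w, by omega⟩
  obtain ⟨n, rfl, hmn⟩ : ∃ n, q = w + n + 1 ∧ m ≤ n := ⟨q - w - 1, by omega, by omega⟩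
  refine Eq.trans ?_ (key m n hmn)
  refine Finset.sum_nbij' (fun i => i - w) (fun j => w + j) ?_ ?_ ?_ ?_ ?_
  · intro i hi; simp only [Finset.mem_Icc] at hi; simp only [Finset.mem_range]; omega
  · intro j hj; simp only [Finset.mem_range] at hj; simp only [Finset.mem_Icc]; omega
  · intro i hi; simp only [Finset.mem_Icc] at hi; show w + (i - w) = i; omega
  · intro j hj; simp only [Finset.mem_range] at hj; show w + j - w = j; omega
  · intro i hi
    simp only [Finset.mem_Icc] at hi
    have a1 : w + m - i = m - (i - w) := by omega
    have a2 : w + n + 1 - i - 1 = n - (i - w) := by omega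
    have a3 : w + n + 1 - w = n + 1 := by omega
    rw [a1, a2, a3]
end

section
/- Let ν : ℝ^q → ℝ be a polynomial and ν̂_s its Cut-HDMR approximation with anchor 0. If B = (B_1,...,B_q) has independent standard normal components, then E[ν̂_s(B)] = ∑_{α : |supp α| ≤ s} c_α ∏_{k ∈ supp α} E[B_k^{α_k}], i.e., the DRM approximation of the Gaussian integral of ν equals the Gaussian integral of the ≤ s-interaction part of ν; in particular, if all monomials of ν have interaction order ≤ s, then E[ν̂_s(B)] = E[ν(B)] exactly. -/
open Finset MeasureTheory Real

/-- For a function `f : ℝ^q → ℝ` and a subset `S ⊆ {1,...,q}`, `cutComponent f S b` is `f`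
evaluated at the vector whose coordinates in `S` equal those of `b` and whose remaining
coordinates are `0`. -/
noncomputable def cutComponent {q : ℕ} (f : (Fin q → ℝ) → ℝ) (S : Finset (Fin q))
    (b : Fin q → ℝ) : ℝ :=
  f fun k => if k ∈ S then b k else 0

/-- The `s`-variate Cut-HDMR approximation (anchored at `0`) of `f : ℝ^q → ℝ`. -/
noncomputable def cutHDMR {q : ℕ} (s : ℕ) (f : (Fin q → ℝ) → ℝ) (b : Fin q → ℝ) : ℝ :=
  ∑ i ∈ Finset.range (s + 1),
    (-1 : ℝ) ^ (s - i) * (Nat.choose (q - i - 1) (s - i)) *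
      ∑ S ∈ (Finset.univ : Finset (Fin q)).powersetCard i, cutComponent f S b

/-- The standard Gaussian density on `ℝ^q` with independent standard normal components. -/
noncomputable def stdGaussDensity {q : ℕ} (b : Fin q → ℝ) : ℝ :=
  ∏ k, (Real.sqrt (2 * Real.pi))⁻¹ * Real.exp (-(b k) ^ 2 / 2)

section Aux
open PowerSeries



noncomputable def g1 (x : ℝ) : ℝ := (Real.sqrt (2 * Real.pi))⁻¹ * Real.exp (-x ^ 2 / 2)

lemma g1_int : Integrable g1 := by
  have h := integrable_exp_neg_mul_sq (by norm_num : (0:ℝ) < 1/2)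
  have := h.const_mul ((Real.sqrt (2 * Real.pi))⁻¹)
  convert this using 2 with x
  unfold g1
  ring_nf

lemma g1_total : ∫ x, g1 x = 1 := by
  have h : (∫ x : ℝ, Real.exp (-(1/2) * x ^ 2)) = Real.sqrt (Real.pi / (1/2)) :=
    integral_gaussian (1/2)
  have h2 : (∫ x : ℝ, g1 x) = (Real.sqrt (2 * Real.pi))⁻¹ * ∫ x : ℝ, Real.exp (-(1/2) * x ^ 2) := by
    rw [← integral_const_mul]
    congr 1 with x
    unfold g1
    ring_nf
  rw [h2, h]
  have : Real.pi / (1/2) = 2 * Real.pi := by ring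
  rw [this]
  field_simp

lemma pow_gauss_int (n : ℕ) : Integrable (fun x : ℝ => x ^ n * g1 x) := by
  have key : Integrable (fun x : ℝ => x ^ n * Real.exp (-x ^ 2 / 2)) := by
    have hbd : Integrable (fun x : ℝ => ((n.factorial : ℝ) * Real.exp 1) * Real.exp (-(1/4) * x ^ 2)) :=
      (integrable_exp_neg_mul_sq (by norm_num : (0:ℝ) < 1/4)).const_mul _
    refine Integrable.mono' hbd ?_ ?_
    · exact (Continuous.mul (continuous_pow n) (Real.continuous_exp.comp (by continuity))).aestronglyMeasurable
    · filter_upwards with x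
      have h1 : |x| ^ n ≤ (n.factorial : ℝ) * Real.exp |x| := by
        have := Real.pow_div_factorial_le_exp (x := |x|) (abs_nonneg x) n
        have hf : (0:ℝ) < n.factorial := by positivity
        calc |x| ^ n = (|x| ^ n / n.factorial) * n.factorial := by field_simp
          _ ≤ Real.exp |x| * n.factorial := by
              apply mul_le_mul_of_nonneg_right this hf.le
          _ = (n.factorial : ℝ) * Real.exp |x| := by ring
      have h2 : Real.exp (|x| - x ^ 2 / 2) ≤ Real.exp 1 * Real.exp (-(1/4) * x ^ 2) := by
        rw [← Real.exp_add]
        apply Real.exp_le_exp.2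
        nlinarith [abs_nonneg x, sq_abs x, sq_nonneg (|x| - 2)]
      calc ‖x ^ n * Real.exp (-x ^ 2 / 2)‖ = |x| ^ n * Real.exp (-x ^ 2 / 2) := by
            rw [norm_mul, norm_pow, Real.norm_eq_abs, Real.norm_eq_abs,
              Real.abs_exp]
        _ ≤ ((n.factorial : ℝ) * Real.exp |x|) * Real.exp (-x ^ 2 / 2) := by
            apply mul_le_mul_of_nonneg_right h1 (Real.exp_pos _).le
        _ = (n.factorial : ℝ) * Real.exp (|x| - x ^ 2 / 2) := by
            rw [mul_assoc, ← Real.exp_add]; ring_nf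
        _ ≤ (n.factorial : ℝ) * (Real.exp 1 * Real.exp (-(1/4) * x ^ 2)) := by
            apply mul_le_mul_of_nonneg_left h2 (by positivity)
        _ = ((n.factorial : ℝ) * Real.exp 1) * Real.exp (-(1/4) * x ^ 2) := by ring
  have := key.const_mul ((Real.sqrt (2 * Real.pi))⁻¹)
  convert this using 2 with x
  unfold g1
  ring

lemma coeff_one_sub_pow (m k : ℕ) :
    (PowerSeries.coeff k) ((1 - PowerSeries.X : PowerSeries ℝ) ^ m)
      = (-1 : ℝ) ^ k * (m.choose k : ℝ) := by
  have hexp : (1 - PowerSeries.X : PowerSeries ℝ) ^ m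
      = ∑ j ∈ Finset.range (m + 1),
          ((-1 : ℝ) ^ j * (m.choose j : ℝ)) • (PowerSeries.X : PowerSeries ℝ) ^ j := by
    rw [sub_eq_add_neg, add_comm]
    rw [add_pow]
    refine Finset.sum_congr rfl fun j hj => ?_
    rw [neg_pow]
    simp [smul_eq_C_mul, PowerSeries.smul_eq_C_mul]
    ring
  rw [hexp, map_sum]
  simp only [_root_.map_smul, PowerSeries.coeff_X_pow, smul_eq_mul]
  rw [Finset.sum_eq_single k]
  · simp
  · intro j _ hj
    simp [Ne.symm hj]
  · intro hk
    have : m < k := by simpa using hk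
    simp [Nat.choose_eq_zero_of_lt this]

lemma comb_identity (t m : ℕ) (h : t < m) :
    ∑ k ∈ Finset.range (t + 1),
      (-1 : ℝ) ^ (t - k) * ((m - 1 - k).choose (t - k) : ℝ) * (m.choose k : ℝ) = 1 := by
  set d := m - t with hd
  have hd1 : 0 < d := by omega
  have hkey : ((1 - PowerSeries.X : PowerSeries ℝ) ^ m) * (PowerSeries.invOneSubPow ℝ d).val
      = (1 - PowerSeries.X : PowerSeries ℝ) ^ t := by
    have hm : m = t + d := by omega
    rw [hm, pow_add, mul_assoc, ← PowerSeries.invOneSubPow_inv_eq_one_sub_pow ℝ d,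
      Units.inv_eq_val_inv, Units.inv_mul, mul_one]
  have hco := congrArg (PowerSeries.coeff t) hkey
  rw [PowerSeries.coeff_mul, Finset.Nat.sum_antidiagonal_eq_sum_range_succ_mk] at hco
  rw [coeff_one_sub_pow, PowerSeries.invOneSubPow_val_eq_mk_sub_one_add_choose_of_pos ℝ d hd1] at hco
  simp only [coeff_one_sub_pow, PowerSeries.coeff_mk] at hco
  -- hco : ∑ k in range (t+1), (-1)^k * choose m k * choose (d - 1 + (t - k)) (d-1) = (-1)^t * 1
  have hform : ∀ k ∈ Finset.range (t + 1),
      (-1 : ℝ) ^ (t - k) * ((m - 1 - k).choose (t - k) : ℝ) * (m.choose k : ℝ)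
        = (-1 : ℝ) ^ t * ((-1 : ℝ) ^ k * (m.choose k : ℝ) * ((d - 1 + (t - k)).choose (d - 1) : ℝ)) := by
    intro k hk
    have hkt : k ≤ t := by simpa [Nat.lt_succ_iff] using hk
    have h1 : d - 1 + (t - k) = m - 1 - k := by omega
    have h2 : ((m - 1 - k).choose (t - k) : ℝ) = ((m - 1 - k).choose (d - 1) : ℝ) := by
      have hle : t - k ≤ m - 1 - k := by omega
      have h2n : (m - 1 - k).choose (t - k) = (m - 1 - k).choose (d - 1) := by
        rw [← Nat.choose_symm hle]
        congr 1
        omega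
      exact_mod_cast congrArg (Nat.cast : ℕ → ℝ) h2n
    have h3 : (-1 : ℝ) ^ (t - k) = (-1 : ℝ) ^ t * (-1 : ℝ) ^ k := by
      rw [← pow_add]
      have he : t + k = (t - k) + 2 * k := by omega
      rw [he, pow_add, pow_mul]
      norm_num
    rw [h1, h2, h3]
    ring
  rw [Finset.sum_congr rfl hform, ← Finset.mul_sum, hco]
  rw [Nat.choose_self]
  push_cast
  rw [mul_one, ← pow_add, ← two_mul, pow_mul]
  norm_num

lemma count_card {q : ℕ} (i : ℕ) (T : Finset (Fin q)) (hT : T.card ≤ i) :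
    (((Finset.univ : Finset (Fin q)).powersetCard i).filter (fun S => T ⊆ S)).card
      = (q - T.card).choose (i - T.card) := by
  have := Finset.card_bij'
    (i := fun (S : Finset (Fin q)) (_ : S ∈ ((Finset.univ : Finset (Fin q)).powersetCard i).filter (fun S => T ⊆ S)) => S \ T)
    (j := fun (U : Finset (Fin q)) (_ : U ∈ Tᶜ.powersetCard (i - T.card)) => U ∪ T)
    (hi := ?_) (hj := ?_) (left_inv := ?_) (right_inv := ?_)
  · rw [this, Finset.card_powersetCard, Finset.card_compl]
    simp [Fintype.card_fin]
  · intro S hS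
    rw [Finset.mem_filter, Finset.mem_powersetCard] at hS
    obtain ⟨⟨-, hcard⟩, hTS⟩ := hS
    rw [Finset.mem_powersetCard]
    constructor
    · intro x hx
      rw [Finset.mem_compl]
      exact fun hxT => (Finset.mem_sdiff.1 hx).2 hxT
    · rw [Finset.card_sdiff_of_subset hTS, hcard]
  · intro U hU
    rw [Finset.mem_powersetCard] at hU
    obtain ⟨hUc, hUcard⟩ := hU
    have hdisj : Disjoint U T := by
      rw [Finset.disjoint_left]
      intro x hxU hxT
      exact (Finset.mem_compl.1 (hUc hxU)) hxT
    rw [Finset.mem_filter, Finset.mem_powersetCard]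
    refine ⟨⟨Finset.subset_univ _, ?_⟩, Finset.subset_union_right⟩
    rw [Finset.card_union_of_disjoint hdisj, hUcard]
    omega
  · intro S hS
    rw [Finset.mem_filter] at hS
    exact Finset.sdiff_union_of_subset hS.2
  · intro U hU
    rw [Finset.mem_powersetCard] at hU
    have hdisj : Disjoint U T := by
      rw [Finset.disjoint_left]
      intro x hxU hxT
      exact (Finset.mem_compl.1 (hU.1 hxU)) hxT
    show (U ∪ T) \ T = U
    rw [Finset.union_sdiff_cancel_right hdisj]

lemma count_card_zero {q : ℕ} (i : ℕ) (T : Finset (Fin q)) (hT : i < T.card) :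
    (((Finset.univ : Finset (Fin q)).powersetCard i).filter (fun S => T ⊆ S)) = ∅ := by
  rw [Finset.filter_eq_empty_iff]
  intro S hS
  rw [Finset.mem_powersetCard] at hS
  intro hTS
  have := Finset.card_le_card hTS
  omega

lemma key_count (q s j : ℕ) (hs : s < q) (hj : j ≤ s) :
    ∑ i ∈ Finset.range (s + 1),
      (-1 : ℝ) ^ (s - i) * ((q - i - 1).choose (s - i) : ℝ) *
        (if j ≤ i then ((q - j).choose (i - j) : ℝ) else 0) = 1 := by
  have hsub : Finset.Ico j (s + 1) ⊆ Finset.range (s + 1) := by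
    intro x hx
    rw [Finset.mem_range]
    exact (Finset.mem_Ico.1 hx).2
  rw [← Finset.sum_subset hsub]
  · rw [Finset.sum_Ico_eq_sum_range]
    have hrw : s + 1 - j = (s - j) + 1 := by omega
    rw [hrw]
    refine Eq.trans (Finset.sum_congr rfl fun k hk => ?_) (comb_identity (s - j) (q - j) (by omega))
    rw [Finset.mem_range] at hk
    rw [if_pos (by omega)]
    have e1 : s - (j + k) = s - j - k := by omega
    have e2 : q - (j + k) - 1 = q - j - 1 - k := by omega
    have e3 : j + k - j = k := by omega
    rw [e1, e2, e3]
  · intro i hi hni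
    rw [Finset.mem_range] at hi
    rw [Finset.mem_Ico] at hni
    rw [if_neg (by omega), mul_zero]

lemma mono_density {q : ℕ} (α : Fin q →₀ ℕ) (b : Fin q → ℝ) :
    (∏ k, (b k) ^ (α k)) * stdGaussDensity b = ∏ k, ((b k) ^ (α k) * g1 (b k)) := by
  unfold stdGaussDensity g1
  rw [← Finset.prod_mul_distrib]

lemma integrable_monomial {q : ℕ} (α : Fin q →₀ ℕ) :
    Integrable (fun b : Fin q → ℝ => (∏ k, (b k) ^ (α k)) * stdGaussDensity b) := by
  have : (fun b : Fin q → ℝ => (∏ k, (b k) ^ (α k)) * stdGaussDensity b)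
      = fun b : Fin q → ℝ => ∏ k, ((b k) ^ (α k) * g1 (b k)) := by
    funext b
    exact mono_density α b
  rw [this]
  exact Integrable.fintype_prod fun k => pow_gauss_int (α k)

lemma integral_monomial {q : ℕ} (α : Fin q →₀ ℕ) :
    (∫ b : Fin q → ℝ, (∏ k, (b k) ^ (α k)) * stdGaussDensity b)
      = ∏ k ∈ α.support, ∫ x : ℝ, x ^ (α k) * g1 x := by
  simp_rw [mono_density]
  rw [MeasureTheory.volume_pi, MeasureTheory.integral_fintype_prod_eq_prod (ι := Fin q) (fun k (x : ℝ) => x ^ (α k) * g1 x)]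
  refine (Finset.prod_subset (Finset.subset_univ _) fun k _ hk => ?_).symm
  have : α k = 0 := Finsupp.notMem_support_iff.1 hk
  rw [this]
  simp only [pow_zero, one_mul]
  exact g1_total

lemma prod_ite_pow {q : ℕ} (α : Fin q →₀ ℕ) (S : Finset (Fin q)) (b : Fin q → ℝ) :
    (∏ k, (if k ∈ S then b k else 0) ^ (α k))
      = if α.support ⊆ S then ∏ k, (b k) ^ (α k) else 0 := by
  by_cases h : α.support ⊆ S
  · rw [if_pos h]
    refine Finset.prod_congr rfl fun k _ => ?_
    by_cases hk : k ∈ S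
    · rw [if_pos hk]
    · have : α k = 0 := by
        by_contra hα
        exact hk (h (Finsupp.mem_support_iff.2 hα))
      rw [this, pow_zero, pow_zero]
  · rw [if_neg h]
    obtain ⟨k, hk, hkS⟩ := Finset.not_subset.1 h
    refine Finset.prod_eq_zero (Finset.mem_univ k) ?_
    rw [if_neg hkS]
    exact zero_pow (Finsupp.mem_support_iff.1 hk)

lemma cutComponent_eval {q : ℕ} (ν : MvPolynomial (Fin q) ℝ) (S : Finset (Fin q))
    (b : Fin q → ℝ) :
    cutComponent (fun x => MvPolynomial.eval x ν) S b
      = ∑ α ∈ ν.support, ν.coeff α * (if α.support ⊆ S then ∏ k, (b k) ^ (α k) else 0) := by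
  unfold cutComponent
  show MvPolynomial.eval _ ν = _
  rw [MvPolynomial.eval_eq']
  refine Finset.sum_congr rfl fun α _ => ?_
  rw [prod_ite_pow]

lemma integrable_term {q : ℕ} (α : Fin q →₀ ℕ) (c : ℝ) (cond : Prop) [Decidable cond] :
    Integrable (fun b : Fin q → ℝ =>
      c * (if cond then ∏ k, (b k) ^ (α k) else 0) * stdGaussDensity b) := by
  by_cases h : cond
  · simp only [if_pos h]
    have := (integrable_monomial α).const_mul c
    simpa [mul_assoc] using this
  · simp only [if_neg h, mul_zero, zero_mul]
    exact integrable_zero _ _ _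

lemma integrable_cutComponent {q : ℕ} (ν : MvPolynomial (Fin q) ℝ) (S : Finset (Fin q)) :
    Integrable (fun b : Fin q → ℝ =>
      cutComponent (fun x => MvPolynomial.eval x ν) S b * stdGaussDensity b) := by
  have heq : (fun b : Fin q → ℝ =>
      cutComponent (fun x => MvPolynomial.eval x ν) S b * stdGaussDensity b)
      = fun b : Fin q → ℝ => ∑ α ∈ ν.support,
          ν.coeff α * (if α.support ⊆ S then ∏ k, (b k) ^ (α k) else 0) * stdGaussDensity b := by
    funext b
    rw [cutComponent_eval, Finset.sum_mul]
  rw [heq]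
  exact integrable_finset_sum _ fun α _ => integrable_term α (ν.coeff α) _

lemma integral_cutComponent {q : ℕ} (ν : MvPolynomial (Fin q) ℝ) (S : Finset (Fin q)) :
    (∫ b : Fin q → ℝ, cutComponent (fun x => MvPolynomial.eval x ν) S b * stdGaussDensity b)
      = ∑ α ∈ ν.support, ν.coeff α *
          (if α.support ⊆ S then ∏ k ∈ α.support, ∫ x : ℝ, x ^ (α k) * g1 x else 0) := by
  have heq : ∀ b : Fin q → ℝ,
      cutComponent (fun x => MvPolynomial.eval x ν) S b * stdGaussDensity b
      = ∑ α ∈ ν.support,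
          ν.coeff α * (if α.support ⊆ S then ∏ k, (b k) ^ (α k) else 0) * stdGaussDensity b := by
    intro b
    rw [cutComponent_eval, Finset.sum_mul]
  simp_rw [heq]
  rw [MeasureTheory.integral_finset_sum _ fun α _ => integrable_term α (ν.coeff α) _]
  refine Finset.sum_congr rfl fun α _ => ?_
  by_cases h : α.support ⊆ S
  · simp only [if_pos h]
    have : (fun b : Fin q → ℝ => ν.coeff α * (∏ k, (b k) ^ (α k)) * stdGaussDensity b)
        = fun b : Fin q → ℝ => ν.coeff α * ((∏ k, (b k) ^ (α k)) * stdGaussDensity b) := by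
      funext b; ring
    rw [this, MeasureTheory.integral_const_mul, integral_monomial]
  · simp only [if_neg h, mul_zero, zero_mul, integral_zero]


end Aux

/-- If `B` has independent standard normal components, then the Gaussian expectation of the
Cut-HDMR approximation `ν̂_s` of a polynomial `ν` equals the sum, over monomials of `ν` with at
most `s` distinct variables, of the coefficient times the product of the Gaussian moments; in
particular, if all monomials of `ν` have interaction order `≤ s`, then
`E[ν̂_s(B)] = E[ν(B)]` exactly. -/
theorem cutHDMR_gaussian_expectation (q s : ℕ) (hs : s < q)
    (ν : MvPolynomial (Fin q) ℝ) :
    (∫ b : Fin q → ℝ, cutHDMR s (fun x => MvPolynomial.eval x ν) b * stdGaussDensity b) =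
      ∑ α ∈ ν.support.filter (fun α => α.support.card ≤ s),
        ν.coeff α *
          ∏ k ∈ α.support,
            ∫ x : ℝ, x ^ α k * ((Real.sqrt (2 * Real.pi))⁻¹ * Real.exp (-x ^ 2 / 2)) ∧
    ((∀ α ∈ ν.support, α.support.card ≤ s) →
      (∫ b : Fin q → ℝ, cutHDMR s (fun x => MvPolynomial.eval x ν) b * stdGaussDensity b) =
        ∫ b : Fin q → ℝ, MvPolynomial.eval b ν * stdGaussDensity b) := by
  set c : ℕ → ℝ := fun i => (-1 : ℝ) ^ (s - i) * ((q - i - 1).choose (s - i) : ℝ) with hc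
  set M : (Fin q →₀ ℕ) → ℝ := fun α => ∏ k ∈ α.support, ∫ x : ℝ, x ^ α k * g1 x with hM
  -- step 1 : exchange integral with sums
  have h1 : (∫ b : Fin q → ℝ, cutHDMR s (fun x => MvPolynomial.eval x ν) b * stdGaussDensity b)
      = ∑ i ∈ Finset.range (s + 1), c i *
          ∑ S ∈ (Finset.univ : Finset (Fin q)).powersetCard i,
            ∫ b : Fin q → ℝ, cutComponent (fun x => MvPolynomial.eval x ν) S b
              * stdGaussDensity b := by
    have hfun : (fun b : Fin q → ℝ =>
        cutHDMR s (fun x => MvPolynomial.eval x ν) b * stdGaussDensity b)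
        = fun b : Fin q → ℝ => ∑ i ∈ Finset.range (s + 1),
            ∑ S ∈ (Finset.univ : Finset (Fin q)).powersetCard i,
              c i * (cutComponent (fun x => MvPolynomial.eval x ν) S b * stdGaussDensity b) := by
      funext b
      unfold cutHDMR
      rw [Finset.sum_mul]
      refine Finset.sum_congr rfl fun i _ => ?_
      rw [Finset.mul_sum, Finset.sum_mul]
      exact Finset.sum_congr rfl fun S _ => (mul_assoc _ _ _)
    rw [hfun, MeasureTheory.integral_finset_sum _ fun i _ =>
      integrable_finset_sum _ fun S _ => (integrable_cutComponent ν S).const_mul (c i)]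
    refine Finset.sum_congr rfl fun i _ => ?_
    rw [MeasureTheory.integral_finset_sum _ fun S _ =>
      (integrable_cutComponent ν S).const_mul (c i), Finset.mul_sum]
    exact Finset.sum_congr rfl fun S _ => MeasureTheory.integral_const_mul _ _
  -- step 2 : evaluate each cut-component integral and count subsets
  have h2 : ∀ i, (∑ S ∈ (Finset.univ : Finset (Fin q)).powersetCard i,
      ∫ b : Fin q → ℝ, cutComponent (fun x => MvPolynomial.eval x ν) S b * stdGaussDensity b)
      = ∑ α ∈ ν.support, (ν.coeff α * M α) *
          (if α.support.card ≤ i then ((q - α.support.card).choose (i - α.support.card) : ℝ)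
            else 0) := by
    intro i
    simp_rw [integral_cutComponent]
    rw [Finset.sum_comm]
    refine Finset.sum_congr rfl fun α _ => ?_
    have hterm : ∀ S : Finset (Fin q),
        ν.coeff α * (if α.support ⊆ S then M α else 0)
          = if α.support ⊆ S then ν.coeff α * M α else 0 := by
      intro S
      rw [mul_ite, mul_zero]
    change ∑ S ∈ _, ν.coeff α * (if α.support ⊆ S then M α else 0) = _
    simp_rw [hterm]
    rw [← Finset.sum_filter, Finset.sum_const, nsmul_eq_mul]
    by_cases hcard : α.support.card ≤ i
    · rw [count_card i _ hcard, if_pos hcard]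
      ring
    · rw [count_card_zero i _ (by omega)]
      rw [if_neg hcard]
      simp
  -- step 3 : swap sums and apply the combinatorial identity
  have h3 : (∫ b : Fin q → ℝ, cutHDMR s (fun x => MvPolynomial.eval x ν) b * stdGaussDensity b)
      = ∑ α ∈ ν.support, (if α.support.card ≤ s then ν.coeff α * M α else 0) := by
    rw [h1]
    simp_rw [h2, Finset.mul_sum]
    rw [Finset.sum_comm]
    refine Finset.sum_congr rfl fun α _ => ?_
    by_cases hcard : α.support.card ≤ s
    · rw [if_pos hcard]
      have hkc := key_count q s α.support.card hs hcard
      calc ∑ i ∈ Finset.range (s + 1), c i * ((ν.coeff α * M α) *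
              (if α.support.card ≤ i then ((q - α.support.card).choose (i - α.support.card) : ℝ)
                else 0))
          = (ν.coeff α * M α) * ∑ i ∈ Finset.range (s + 1), c i *
              (if α.support.card ≤ i then ((q - α.support.card).choose (i - α.support.card) : ℝ)
                else 0) := by
            rw [Finset.mul_sum]
            exact Finset.sum_congr rfl fun i _ => by ring
        _ = ν.coeff α * M α := by
            have : ∑ i ∈ Finset.range (s + 1), c i *
                (if α.support.card ≤ i then
                  ((q - α.support.card).choose (i - α.support.card) : ℝ) else 0) = 1 := by
              exact hkc
            rw [this, mul_one]
    · rw [if_neg hcard]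
      refine Finset.sum_eq_zero fun i hi => ?_
      rw [Finset.mem_range] at hi
      rw [if_neg (by omega), mul_zero, mul_zero]
  constructor
  · rw [h3, ← Finset.sum_filter]
    rfl
  · intro hall
    have hrhs : (∫ b : Fin q → ℝ, MvPolynomial.eval b ν * stdGaussDensity b)
        = ∑ α ∈ ν.support, ν.coeff α * M α := by
      have hfun : (fun b : Fin q → ℝ => MvPolynomial.eval b ν * stdGaussDensity b)
          = fun b : Fin q → ℝ => ∑ α ∈ ν.support,
              ν.coeff α * ((∏ k, (b k) ^ (α k)) * stdGaussDensity b) := by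
        funext b
        rw [MvPolynomial.eval_eq', Finset.sum_mul]
        exact Finset.sum_congr rfl fun α _ => (mul_assoc _ _ _)
      rw [hfun, MeasureTheory.integral_finset_sum _ fun α _ =>
        (integrable_monomial α).const_mul (ν.coeff α)]
      refine Finset.sum_congr rfl fun α _ => ?_
      rw [MeasureTheory.integral_const_mul, integral_monomial]
    rw [h3, hrhs]
    refine Finset.sum_congr rfl fun α hα => ?_
    rw [if_pos (hall α hα)]
end
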